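/- In the canonical form of the linear regression model, let Q = (Q₁ Q₂) be an n×n orthogonal matrix with the columns of Q₁ spanning the column space of X, let β̂ = β̂(Y) be such that Y ↦ Xβ̂(Y) is differentiable, and let θ̂(Z, U) = Q₁ᵗXβ̂(Q(Zᵗ,Uᵗ)ᵗ). Then div_Y(Xβ̂(Y)) = div_Z θ̂(Z, U), where (Zᵗ, Uᵗ)ᵗ = QᵗY; that is, the divergence with respect to Y of Xβ̂ equals the divergence with respect to Z of θ̂. -/

import Mathlib

open MeasureTheory Matrix

/-- The divergence of a map `g : ℝ^ι → ℝ^ι` at `x`: `∑ i, ∂gᵢ(x)/∂xᵢ`. -/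
noncomputable def vecDiv {ι : Type*} [Fintype ι] [DecidableEq ι]
    (g : (ι → ℝ) → (ι → ℝ)) (x : ι → ℝ) : ℝ :=
  ∑ i, fderiv ℝ g x (Pi.single i 1) i

/-- **Equality of divergences in the canonical form.**
With `Q = (Q₁ Q₂)` orthogonal, the columns of `Q₁` spanning the column space of `X`,
`Z = Q₁ᵗY`, `U = Q₂ᵗY` and `θ̂(Z,U) = Q₁ᵗ X β̂(Q(Zᵗ,Uᵗ)ᵗ)`, the divergence of `Y ↦ Xβ̂(Y)`
at `Y` equals the divergence of `Z' ↦ θ̂(Z', U)` at `Z`. -/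
theorem divergence_canonical_form {n p q : ℕ}
    (X : Matrix (Fin n) (Fin p) ℝ) (hX : X.rank = p)
    (Q₁ : Matrix (Fin n) (Fin p) ℝ) (Q₂ : Matrix (Fin n) (Fin q) ℝ)
    (horth : (Matrix.fromCols Q₁ Q₂)ᵀ * Matrix.fromCols Q₁ Q₂ = 1)
    (horth' : Matrix.fromCols Q₁ Q₂ * (Matrix.fromCols Q₁ Q₂)ᵀ = 1)
    (hspan : LinearMap.range Q₁.mulVecLin = LinearMap.range X.mulVecLin)
    (b : (Fin n → ℝ) → (Fin p → ℝ))
    (hdiff : Differentiable ℝ (fun y => X *ᵥ b y))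
    (y : Fin n → ℝ) :
    vecDiv (fun y' => X *ᵥ b y') y
      = vecDiv
          (fun z => Q₁ᵀ *ᵥ (X *ᵥ b
            (Matrix.fromCols Q₁ Q₂ *ᵥ (Sum.elim z (Q₂ᵀ *ᵥ y) : Fin p ⊕ Fin q → ℝ))))
          (Q₁ᵀ *ᵥ y) := by
  classical
  set g : (Fin n → ℝ) → (Fin n → ℝ) := fun y' => X *ᵥ b y' with hgdef
  -- Q₁ᵀ * Q₁ = 1
  have hQ1 : Q₁ᵀ * Q₁ = 1 := by
    have h := congrArg Matrix.toBlocks₁₁ horth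
    rw [Matrix.transpose_fromCols, Matrix.fromRows_mul_fromCols] at h
    ext i j
    simpa [Matrix.toBlocks₁₁, Matrix.one_apply] using congrFun (congrFun h i) j
  -- Q₁*Q₁ᵀ + Q₂*Q₂ᵀ = 1
  have hQQ : Q₁ * Q₁ᵀ + Q₂ * Q₂ᵀ = 1 := by
    rw [Matrix.transpose_fromCols, Matrix.fromCols_mul_fromRows] at horth'
    exact horth'
  -- projection property
  have hproj : ∀ w, w ∈ LinearMap.range X.mulVecLin → (Q₁ * Q₁ᵀ) *ᵥ w = w := by
    intro w hw
    rw [← hspan] at hw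
    obtain ⟨v, rfl⟩ := hw
    show (Q₁ * Q₁ᵀ) *ᵥ (Q₁ *ᵥ v) = Q₁ *ᵥ v
    rw [Matrix.mulVec_mulVec, Matrix.mul_assoc, hQ1, Matrix.mul_one]
  have hg : ∀ y', (Q₁ * Q₁ᵀ) *ᵥ g y' = g y' := fun y' => hproj _ ⟨b y', rfl⟩
  -- derivative of g at y
  have hdy := (hdiff y).hasFDerivAt
  set A : (Fin n → ℝ) →L[ℝ] (Fin n → ℝ) := fderiv ℝ g y with hA
  -- continuous linear maps for matrices
  let P : (Fin n → ℝ) →L[ℝ] (Fin n → ℝ) :=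
    LinearMap.toContinuousLinearMap (Q₁ * Q₁ᵀ).mulVecLin
  have hPA : ∀ v, (Q₁ * Q₁ᵀ) *ᵥ A v = A v := by
    have h1 : HasFDerivAt (fun y' => (Q₁ * Q₁ᵀ) *ᵥ g y') (P.comp A) y :=
      (P.hasFDerivAt.comp y hdy)
    have h2 : (fun y' => (Q₁ * Q₁ᵀ) *ᵥ g y') = g := funext hg
    rw [h2] at h1
    have := h1.unique hdy
    intro v
    conv_rhs => rw [← this]
    rfl
  -- inner affine map
  set u : Fin q → ℝ := Q₂ᵀ *ᵥ y with hu
  set z₀ : Fin p → ℝ := Q₁ᵀ *ᵥ y with hz₀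
  let Q1L : (Fin p → ℝ) →L[ℝ] (Fin n → ℝ) :=
    LinearMap.toContinuousLinearMap Q₁.mulVecLin
  let Q1TL : (Fin n → ℝ) →L[ℝ] (Fin p → ℝ) :=
    LinearMap.toContinuousLinearMap Q₁ᵀ.mulVecLin
  have hphi : ∀ z, Matrix.fromCols Q₁ Q₂ *ᵥ (Sum.elim z u : Fin p ⊕ Fin q → ℝ)
      = Q₁ *ᵥ z + Q₂ *ᵥ u := fun z => Matrix.fromCols_mulVec_sumElim _ _ _ _
  have hphi0 : Matrix.fromCols Q₁ Q₂ *ᵥ (Sum.elim z₀ u : Fin p ⊕ Fin q → ℝ) = y := by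
    rw [hphi, hz₀, hu, Matrix.mulVec_mulVec, Matrix.mulVec_mulVec, ← Matrix.add_mulVec, hQQ,
      Matrix.one_mulVec]
  have hphidiff : HasFDerivAt
      (fun z => Matrix.fromCols Q₁ Q₂ *ᵥ (Sum.elim z u : Fin p ⊕ Fin q → ℝ)) Q1L z₀ := by
    have : HasFDerivAt (fun z => Q₁ *ᵥ z + Q₂ *ᵥ u) Q1L z₀ := by
      have h := (Q1L.hasFDerivAt (x := z₀)).add_const (Q₂ *ᵥ u)
      simpa [Q1L, Matrix.mulVecLin_apply] using h
    exact this.congr_of_eventuallyEq (Filter.Eventually.of_forall hphi)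
  -- derivative of θ
  have hθ : HasFDerivAt
      (fun z => Q₁ᵀ *ᵥ (X *ᵥ b
        (Matrix.fromCols Q₁ Q₂ *ᵥ (Sum.elim z (Q₂ᵀ *ᵥ y) : Fin p ⊕ Fin q → ℝ))))
      ((Q1TL.comp A).comp Q1L) z₀ := by
    have hgy : HasFDerivAt g A (Matrix.fromCols Q₁ Q₂ *ᵥ (Sum.elim z₀ u : Fin p ⊕ Fin q → ℝ)) := by
      rw [hphi0]; exact hdy
    exact (Q1TL.hasFDerivAt.comp _ (hgy.comp z₀ hphidiff))
  -- compute both divergences as traces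
  set M : Matrix (Fin n) (Fin n) ℝ := LinearMap.toMatrix' (A : (Fin n → ℝ) →ₗ[ℝ] (Fin n → ℝ))
    with hMdef
  have hM : ∀ v, A v = M *ᵥ v := by
    intro v
    have : Matrix.toLin' M v = A v := by
      rw [hMdef, Matrix.toLin'_toMatrix']; rfl
    rw [← this, Matrix.toLin'_apply]
  have hPM : Q₁ * Q₁ᵀ * M = M := by
    ext i j
    have h0 := hPA (Pi.single j 1)
    rw [hM] at h0
    rw [Matrix.mulVec_mulVec] at h0
    have h := congrFun h0 i
    simpa [Matrix.mulVec_single] using h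
  have hLHS : vecDiv (fun y' => X *ᵥ b y') y = Matrix.trace M := by
    unfold vecDiv
    show ∑ i, A (Pi.single i 1) i = M.trace
    have h : ∀ i : Fin n, A (Pi.single i 1) i = M i i := by
      intro i
      have := congrFun (hM (Pi.single i 1)) i
      simpa using this
    simp only [h]
    simp [Matrix.trace, Matrix.diag]
  have hRHS : vecDiv (fun z => Q₁ᵀ *ᵥ (X *ᵥ b
        (Matrix.fromCols Q₁ Q₂ *ᵥ (Sum.elim z (Q₂ᵀ *ᵥ y) : Fin p ⊕ Fin q → ℝ))))
      z₀ = Matrix.trace (Q₁ᵀ * M * Q₁) := by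
    unfold vecDiv
    rw [hθ.fderiv, Matrix.trace]
    congr 1
    ext i
    have : Q1TL (A (Q1L (Pi.single i 1))) = (Q₁ᵀ * M * Q₁) *ᵥ Pi.single i 1 := by
      rw [Matrix.mul_assoc]
      simp only [Q1TL, Q1L, LinearMap.coe_toContinuousLinearMap', Matrix.mulVecLin_apply, hM,
        Matrix.mulVec_mulVec]
    simp only [ContinuousLinearMap.coe_comp', Function.comp_apply, this]
    simp [Matrix.mulVec_single, Matrix.diag]
  rw [hLHS, hRHS, Matrix.trace_mul_cycle, hPM]
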